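/- arXiv:math/0305396 — 4 statements merged into one kernel-verified Lean document; each statement's English description precedes it below -/
import Mathlib

section
/- Let k ⊆ ℂ be a cubic number field, i.e. a subfield of ℂ with [k : ℚ] = 3. Then for all x, y ∈ k \ ℚ there exist a, b, c, d ∈ ℚ with a·d − b·c ≠ 0, c·x + d ≠ 0, and y = (a·x + b)/(c·x + d). Moreover, for any x ∈ k \ ℚ and any a, b, c, d ∈ ℚ with a·d − b·c ≠ 0, one has c·x + d ≠ 0 and (a·x + b)/(c·x + d) ∈ k \ ℚ. (Thus GL₂(ℚ) acting by fractional linear transformations has exactly two orbits in ℙ¹(k): the set ℙ¹(ℚ) and its complement.) -/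
/-- For a cubic number field `k ⊆ ℂ`, the group `GL₂(ℚ)` acting by fractional
linear transformations acts transitively on `ℙ¹(k) \ ℙ¹(ℚ)` and preserves it, so it has
exactly two orbits in `ℙ¹(k)`: `ℙ¹(ℚ)` and its complement. -/
theorem cubic_field_two_orbits
    (k : Subfield ℂ) (hk : Module.finrank ℚ k = 3) :
    (∀ x y : ℂ, x ∈ k → (∀ q : ℚ, (q : ℂ) ≠ x) → y ∈ k → (∀ q : ℚ, (q : ℂ) ≠ y) →
      ∃ a b c d : ℚ, a * d - b * c ≠ 0 ∧ (c : ℂ) * x + (d : ℂ) ≠ 0 ∧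
        y = ((a : ℂ) * x + (b : ℂ)) / ((c : ℂ) * x + (d : ℂ))) ∧
    (∀ x : ℂ, x ∈ k → (∀ q : ℚ, (q : ℂ) ≠ x) → ∀ a b c d : ℚ, a * d - b * c ≠ 0 →
      (c : ℂ) * x + (d : ℂ) ≠ 0 ∧
      ((a : ℂ) * x + (b : ℂ)) / ((c : ℂ) * x + (d : ℂ)) ∈ k ∧
      (∀ q : ℚ, (q : ℂ) ≠ ((a : ℂ) * x + (b : ℂ)) / ((c : ℂ) * x + (d : ℂ)))) := by
  constructor
  · intro x y hx hxq hy hyq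
    haveI : FiniteDimensional ℚ k := FiniteDimensional.of_finrank_pos (by rw [hk]; norm_num)
    have hdep : ¬ LinearIndependent ℚ
        ![(1 : k), ⟨x, hx⟩, ⟨y, hy⟩, (⟨x, hx⟩ : k) * ⟨y, hy⟩] := by
      intro h
      have h2 := h.fintype_card_le_finrank
      rw [hk] at h2
      simp at h2
    rw [Fintype.not_linearIndependent_iff] at hdep
    obtain ⟨g, hg, i, hgi⟩ := hdep
    have hrel : (g 0 : ℂ) + (g 1 : ℂ) * x + (g 2 : ℂ) * y + (g 3 : ℂ) * (x * y) = 0 := by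
      have h3 := congrArg (fun z : k => (z : ℂ)) hg
      simp [Fin.sum_univ_four, Rat.smul_def, mul_assoc] at h3
      linear_combination h3
    set a := g 1 with ha_def
    set b := g 0 with hb_def
    set c := -g 3 with hc_def
    set d := -g 2 with hd_def
    have key : (a : ℂ) * x + (b : ℂ) = ((c : ℂ) * x + (d : ℂ)) * y := by
      push_cast [hc_def, hd_def]
      linear_combination hrel
    have hcd : (c : ℂ) * x + (d : ℂ) ≠ 0 := by
      intro h0
      have hc : c = 0 := by
        by_contra hc
        apply hxq (-d / c)
        have hcC : (c : ℂ) ≠ 0 := by exact_mod_cast hc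
        push_cast
        field_simp
        linear_combination -h0
      have hd : d = 0 := by
        have : (d : ℂ) = 0 := by
          rw [hc] at h0; simpa using h0
        exact_mod_cast this
      have hab : (a : ℂ) * x + (b : ℂ) = 0 := by
        rw [key, h0, zero_mul]
      have ha : a = 0 := by
        by_contra ha
        apply hxq (-b / a)
        have haC : (a : ℂ) ≠ 0 := by exact_mod_cast ha
        push_cast
        field_simp
        linear_combination -hab
      have hb : b = 0 := by
        have : (b : ℂ) = 0 := by rw [ha] at hab; simpa using hab
        exact_mod_cast this
      apply hgi
      fin_cases i
      · exact hb
      · exact ha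
      · exact neg_eq_zero.mp hd
      · exact neg_eq_zero.mp hc
    have hdet : a * d - b * c ≠ 0 := by
      intro hdet
      have hdetC : (a : ℂ) * (d : ℂ) - (b : ℂ) * (c : ℂ) = 0 := by exact_mod_cast hdet
      by_cases hc : c = 0
      · have hd : d ≠ 0 := by
          intro hd
          apply hcd
          rw [hc, hd]; push_cast; ring
        have hdC : (d : ℂ) ≠ 0 := by exact_mod_cast hd
        have hcC : (c : ℂ) = 0 := by exact_mod_cast hc
        have ha : (a : ℂ) = 0 := by
          have : (a : ℂ) * (d : ℂ) = 0 := by rw [hcC] at hdetC; linear_combination hdetC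
          exact (mul_eq_zero.mp this).resolve_right hdC
        apply hyq (b / d)
        push_cast
        rw [div_eq_iff hdC]
        linear_combination key - x * ha + y * x * hcC
      · have hcC : (c : ℂ) ≠ 0 := by exact_mod_cast hc
        have h5 : (a : ℂ) = (c : ℂ) * y := by
          have h6 : (a : ℂ) * ((c : ℂ) * x + (d : ℂ))
              = ((c : ℂ) * y) * ((c : ℂ) * x + (d : ℂ)) := by
            linear_combination (c : ℂ) * key + hdetC
          exact mul_right_cancel₀ hcd h6
        apply hyq (a / c)
        push_cast
        rw [div_eq_iff hcC]
        linear_combination h5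
    refine ⟨a, b, c, d, hdet, hcd, ?_⟩
    rw [eq_div_iff hcd]
    linear_combination -key
  · intro x hx hxq a b c d hdet
    have hcd : (c : ℂ) * x + (d : ℂ) ≠ 0 := by
      intro h0
      by_cases hc : c = 0
      · have hd : d = 0 := by
          have : (d : ℂ) = 0 := by
            rw [hc] at h0; simpa using h0
          exact_mod_cast this
        apply hdet
        rw [hc, hd]; ring
      · apply hxq (-d / c)
        have hcC : (c : ℂ) ≠ 0 := by exact_mod_cast hc
        push_cast
        field_simp
        linear_combination -h0
    refine ⟨hcd, ?_, ?_⟩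
    · exact div_mem
        (add_mem (mul_mem (SubfieldClass.ratCast_mem k a) hx) (SubfieldClass.ratCast_mem k b))
        (add_mem (mul_mem (SubfieldClass.ratCast_mem k c) hx) (SubfieldClass.ratCast_mem k d))
    · intro q hq
      have h1 : (q : ℂ) * ((c : ℂ) * x + (d : ℂ)) = (a : ℂ) * x + (b : ℂ) := by
        rw [hq]
        exact div_mul_cancel₀ _ hcd
      by_cases hqa : a - q * c = 0
      · have hqaC : (a : ℂ) = (q : ℂ) * (c : ℂ) := by
          have : ((a - q * c : ℚ) : ℂ) = 0 := by exact_mod_cast hqa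
          push_cast at this
          linear_combination this
        have hb : (q : ℂ) * (d : ℂ) = (b : ℂ) := by
          linear_combination h1 + x * hqaC
        have hbQ : q * d = b := by exact_mod_cast hb
        apply hdet
        have haQ : a = q * c := by linarith [sub_eq_zero.mp hqa]
        rw [haQ, ← hbQ]; ring
      · apply hxq ((q * d - b) / (a - q * c))
        have hqaC : ((a - q * c : ℚ) : ℂ) ≠ 0 := by exact_mod_cast hqa
        push_cast at hqaC ⊢
        rw [div_eq_iff hqaC]
        linear_combination h1
end

section
/- Let k ⊆ ℂ be a cubic number field ([k : ℚ] = 3), and let Λ₁, Λ₂ ⊆ k be lattices in ℂ (discrete additive subgroups of ℂ that are free of rank 2). Then there exists μ ∈ ℂ, μ ≠ 0, such that μ·Λ₁ ⊆ Λ₂; that is, the elliptic curves ℂ/Λ₁ and ℂ/Λ₂ are isogenous. -/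
open Module

/-- Auxiliary: in a 3-dimensional `ℚ`-algebra which is a field, given subspaces
`V₁` of dimension ≤ 2 and `V₂` of dimension ≥ 2, there is a nonzero `μ` with
`μ • V₁ ⊆ V₂` (a dimension count on the linear map `μ ↦ (v ↦ μ * v mod V₂)`). -/
theorem exists_mul_mem_aux (K : Type*) [Field K] [Algebra ℚ K] [FiniteDimensional ℚ K]
    (hK : finrank ℚ K = 3) (V₁ V₂ : Submodule ℚ K)
    (h₁ : finrank ℚ V₁ ≤ 2) (h₂ : 2 ≤ finrank ℚ V₂) :
    ∃ μ : K, μ ≠ 0 ∧ ∀ v ∈ V₁, μ * v ∈ V₂ := by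
  let L : K →ₗ[ℚ] (V₁ →ₗ[ℚ] K ⧸ V₂) :=
    { toFun := fun μ => V₂.mkQ ∘ₗ (LinearMap.mulLeft ℚ μ) ∘ₗ V₁.subtype
      map_add' := by
        intro a b; ext v; simp [add_mul]
      map_smul' := by
        intro c a; ext v; simp [smul_mul_assoc] }
  have hq : finrank ℚ (K ⧸ V₂) ≤ 1 := by
    have := Submodule.finrank_quotient_add_finrank V₂
    omega
  have hcodom : finrank ℚ (V₁ →ₗ[ℚ] K ⧸ V₂) ≤ 2 := by
    rw [Module.finrank_linearMap]
    calc finrank ℚ V₁ * finrank ℚ (K ⧸ V₂) ≤ 2 * 1 :=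
          Nat.mul_le_mul h₁ hq
      _ = 2 := by norm_num
  have hker : ∃ μ : K, μ ≠ 0 ∧ L μ = 0 := by
    by_contra h
    push_neg at h
    have hinj : Function.Injective L := by
      rw [← LinearMap.ker_eq_bot, LinearMap.ker_eq_bot']
      intro m hm
      by_contra hm0
      exact h m hm0 hm
    have := LinearMap.finrank_le_finrank_of_injective hinj
    rw [hK] at this
    omega
  obtain ⟨μ, hμ0, hμ⟩ := hker
  refine ⟨μ, hμ0, fun v hv => ?_⟩
  have : (L μ) ⟨v, hv⟩ = 0 := by rw [hμ]; rfl
  simpa [L, Submodule.Quotient.mk_eq_zero] using this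

set_option maxHeartbeats 1000000 in
/-- Two lattices in `ℂ` both contained in a cubic number field `k ⊆ ℂ`
define isogenous elliptic curves: some nonzero `μ ∈ ℂ` satisfies `μ·Λ₁ ⊆ Λ₂`. -/
theorem cubic_field_lattices_isogenous
    (k : Subfield ℂ) (hk : Module.finrank ℚ k = 3)
    (Λ₁ Λ₂ : AddSubgroup ℂ)
    (h1k : (Λ₁ : Set ℂ) ⊆ (k : Set ℂ)) (h2k : (Λ₂ : Set ℂ) ⊆ (k : Set ℂ))
    (h1d : DiscreteTopology Λ₁) (h1f : Nonempty (Module.Basis (Fin 2) ℤ Λ₁))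
    (h2d : DiscreteTopology Λ₂) (h2f : Nonempty (Module.Basis (Fin 2) ℤ Λ₂)) :
    ∃ μ : ℂ, μ ≠ 0 ∧ ∀ x ∈ Λ₁, μ * x ∈ Λ₂ := by
  obtain ⟨b₁⟩ := h1f
  obtain ⟨b₂⟩ := h2f
  have : FiniteDimensional ℚ k := FiniteDimensional.of_finrank_pos (by omega)
  -- the basis elements viewed in `k`
  let e : Fin 2 → k := fun i => ⟨(b₁ i : ℂ), h1k (b₁ i).2⟩
  let f : Fin 2 → k := fun i => ⟨(b₂ i : ℂ), h2k (b₂ i).2⟩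
  let V₁ : Submodule ℚ k := Submodule.span ℚ (Set.range e)
  let V₂ : Submodule ℚ k := Submodule.span ℚ (Set.range f)
  have h₁ : finrank ℚ V₁ ≤ 2 := by
    refine (finrank_span_le_card (R := ℚ) (Set.range e)).trans ?_
    have : (Set.range e).toFinset.card ≤ Fintype.card (Fin 2) := by
      rw [Set.toFinset_range]
      exact Finset.card_image_le.trans (by simp)
    simpa using this
  -- `f` is `ℚ`-linearly independent
  have hfZ : LinearIndependent ℤ f := by
    have hli : LinearIndependent ℤ (fun i => (b₂ i : ℂ)) := by
      have := b₂.linearIndependent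
      have := this.map' Λ₂.subtype.toIntLinearMap (by
        rw [LinearMap.ker_eq_bot]
        exact Subtype.coe_injective)
      exact this
    have hj : Function.Injective (k.subtype.toAddMonoidHom.toIntLinearMap) :=
      Subtype.coe_injective
    exact LinearIndependent.of_comp k.subtype.toAddMonoidHom.toIntLinearMap hli
  have hfQ : LinearIndependent ℚ f := by
    rwa [LinearIndependent.iff_fractionRing ℤ ℚ] at hfZ
  have h₂ : 2 ≤ finrank ℚ V₂ := by
    rw [show V₂ = Submodule.span ℚ (Set.range f) from rfl, finrank_span_eq_card hfQ]
    simp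
  obtain ⟨μ, hμ0, hμ⟩ := exists_mul_mem_aux k hk V₁ V₂ h₁ h₂
  -- each `μ * e i` lies in `V₂`; clear denominators
  have key : ∀ i : Fin 2, ∃ n : ℤ, n ≠ 0 ∧ ((n : ℂ) * μ * (b₁ i : ℂ)) ∈ Λ₂ := by
    intro i
    have hei : e i ∈ V₁ := Submodule.subset_span ⟨i, rfl⟩
    have hmem : μ * e i ∈ V₂ := hμ _ hei
    have : μ * e i ∈ Submodule.span ℚ ({f 0, f 1} : Set k) := by
      have : (Set.range f) = {f 0, f 1} := by
        ext x; simp [Fin.exists_fin_two, eq_comm]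
      rwa [show V₂ = Submodule.span ℚ (Set.range f) from rfl, this] at hmem
    rw [Submodule.mem_span_pair] at this
    obtain ⟨a, b, hab⟩ := this
    refine ⟨(a.den : ℤ) * (b.den : ℤ), by positivity, ?_⟩
    have hsmul : ((a.den * b.den : ℤ) : ℚ) • (μ * e i)
        = ((a.num * b.den : ℤ) : ℚ) • f 0 + ((b.num * a.den : ℤ) : ℚ) • f 1 := by
      rw [← hab]
      push_cast
      rw [smul_add, smul_smul, smul_smul]
      congr 2
      · rw [← Rat.mul_den_eq_num a]; ring
      · rw [← Rat.mul_den_eq_num b]; ring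
    -- transfer to ℂ
    have := congrArg (fun x : k => (x : ℂ)) hsmul
    have hC : ((a.den * b.den : ℤ) : ℂ) * (μ * e i : k)
        = ((a.num * b.den : ℤ) : ℂ) * (f 0 : k) + ((b.num * a.den : ℤ) : ℂ) * (f 1 : k) := by
      have h1 : (((a.den * b.den : ℤ) : ℚ) • (μ * e i) : k) = ((a.den * b.den : ℤ) : ℂ) * (μ * e i : k) := by
        push_cast
        simp [Subfield.smul_def, Rat.smul_def]
      have h2 : ((((a.num * b.den : ℤ) : ℚ) • f 0 + ((b.num * a.den : ℤ) : ℚ) • f 1 : k) : ℂ)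
          = ((a.num * b.den : ℤ) : ℂ) * (f 0 : k) + ((b.num * a.den : ℤ) : ℂ) * (f 1 : k) := by
        push_cast
        simp [Rat.smul_def]
      rw [← h1, ← h2, hsmul]
    have hval : (μ * e i : k) = (μ : ℂ) * (b₁ i : ℂ) := rfl
    rw [hval, ← mul_assoc] at hC
    rw [hC]
    refine add_mem ?_ ?_
    · have := AddSubgroup.zsmul_mem Λ₂ (b₂ 0).2 (a.num * b.den)
      simpa [zsmul_eq_mul] using this
    · have := AddSubgroup.zsmul_mem Λ₂ (b₂ 1).2 (b.num * a.den)
      simpa [zsmul_eq_mul] using this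
  obtain ⟨n₀, hn₀, hm₀⟩ := key 0
  obtain ⟨n₁, hn₁, hm₁⟩ := key 1
  refine ⟨(n₀ * n₁ : ℤ) * μ, ?_, ?_⟩
  · have : (μ : ℂ) ≠ 0 := by
      simpa using Subtype.coe_injective.ne hμ0
    exact mul_ne_zero (by exact_mod_cast mul_ne_zero hn₀ hn₁) this
  · intro x hx
    -- write x as an integer combination of b₁ 0, b₁ 1
    obtain ⟨c₀, c₁, hx'⟩ : ∃ c₀ c₁ : ℤ, (⟨x, hx⟩ : Λ₁) = c₀ • b₁ 0 + c₁ • b₁ 1 := by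
      refine ⟨b₁.repr ⟨x, hx⟩ 0, b₁.repr ⟨x, hx⟩ 1, ?_⟩
      have h := b₁.sum_repr ⟨x, hx⟩
      rw [Fin.sum_univ_two] at h
      exact h.symm
    have hxC : x = (c₀ : ℂ) * (b₁ 0 : ℂ) + (c₁ : ℂ) * (b₁ 1 : ℂ) := by
      have h : x = ((c₀ • b₁ 0 + c₁ • b₁ 1 : Λ₁) : ℂ) := congrArg Subtype.val hx'
      rw [h]
      push_cast [zsmul_eq_mul]
      norm_cast
    rw [hxC, mul_add]
    refine add_mem ?_ ?_
    · have h0 : (n₀ * n₁ : ℤ) * μ * ((c₀ : ℂ) * (b₁ 0 : ℂ))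
          = (n₁ * c₀ : ℤ) • ((n₀ : ℂ) * μ * (b₁ 0 : ℂ)) := by
        push_cast [zsmul_eq_mul]
        ring
      rw [h0]
      exact AddSubgroup.zsmul_mem Λ₂ hm₀ _
    · have h1 : (n₀ * n₁ : ℤ) * μ * ((c₁ : ℂ) * (b₁ 1 : ℂ))
          = (n₀ * c₁ : ℤ) • ((n₁ : ℂ) * μ * (b₁ 1 : ℂ)) := by
        push_cast [zsmul_eq_mul]
        ring
      rw [h1]
      exact AddSubgroup.zsmul_mem Λ₂ hm₁ _
end

section
/- Let α, β ∈ ℂ with β ∉ ℚ + ℚ·α. Suppose there exist two distinct integers k ≠ n and rational numbers a_k, b_k, c_k, d_k and a_n, b_n, c_n, d_n with a_k·d_k − b_k·c_k ≠ 0, c_k·α + d_k ≠ 0, (a_k·α + b_k)/(c_k·α + d_k) = β + k·α, and a_n·d_n − b_n·c_n ≠ 0, c_n·α + d_n ≠ 0, (a_n·α + b_n)/(c_n·α + d_n) = β + n·α. Then α is algebraic over ℚ of degree at most 3, and β ∈ ℚ + ℚ·α + ℚ·α². -/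
open Polynomial

-- helper: if c = 0 in a relation, β ∈ span {1, α}
lemma aux_span_pair (α β : ℂ) (k : ℤ) (a b d : ℚ) (hd : (d:ℂ) ≠ 0)
    (h : ((a:ℂ) * α + (b:ℂ)) / (d:ℂ) = β + (k:ℂ) * α) :
    β ∈ Submodule.span ℚ ({1, α} : Set ℂ) := by
  refine Submodule.mem_span_pair.mpr ⟨b / d, a / d - k, ?_⟩
  have hd' : (d:ℚ) ≠ 0 := by exact_mod_cast hd
  simp only [Rat.smul_def]
  push_cast
  field_simp at h ⊢
  linear_combination h

/-- If `β ∉ ℚ + ℚα` and for two distinct integers `k ≠ n` there are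
rational fractional linear transformations sending `α` to `β + kα` and to `β + nα`
respectively, then `α` is algebraic of degree at most 3 over `ℚ` and
`β ∈ ℚ + ℚα + ℚα²`. -/
theorem degree_three_from_two_relations
    (α β : ℂ) (hβ : β ∉ Submodule.span ℚ ({1, α} : Set ℂ))
    (k n : ℤ) (hkn : k ≠ n)
    (ak bk ck dk : ℚ) (hk1 : ak * dk - bk * ck ≠ 0)
    (hk2 : (ck : ℂ) * α + (dk : ℂ) ≠ 0)
    (hk3 : ((ak : ℂ) * α + (bk : ℂ)) / ((ck : ℂ) * α + (dk : ℂ)) = β + (k : ℂ) * α)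
    (an bn cn dn : ℚ) (hn1 : an * dn - bn * cn ≠ 0)
    (hn2 : (cn : ℂ) * α + (dn : ℂ) ≠ 0)
    (hn3 : ((an : ℂ) * α + (bn : ℂ)) / ((cn : ℂ) * α + (dn : ℂ)) = β + (n : ℂ) * α) :
    (IsAlgebraic ℚ α ∧ (minpoly ℚ α).natDegree ≤ 3) ∧
      β ∈ Submodule.span ℚ ({1, α, α ^ 2} : Set ℂ) := by
  -- c's are nonzero
  have hck : ck ≠ 0 := by
    rintro rfl
    exact hβ (aux_span_pair α β k ak bk dk (by simpa using hk2) (by simpa using hk3))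
  have hcn : cn ≠ 0 := by
    rintro rfl
    exact hβ (aux_span_pair α β n an bn dn (by simpa using hn2) (by simpa using hn3))
  -- cleared forms
  have hk3' : (ak:ℂ) * α + bk = (β + k * α) * ((ck:ℂ) * α + dk) := by
    rw [div_eq_iff hk2] at hk3; linear_combination hk3
  have hn3' : (an:ℂ) * α + bn = (β + n * α) * ((cn:ℂ) * α + dn) := by
    rw [div_eq_iff hn2] at hn3; linear_combination hn3
  -- the cubic polynomial
  set κ : ℚ := (k : ℚ) - n with hκdef
  have hκ : κ ≠ 0 := by
    simp only [hκdef, sub_ne_zero]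
    exact_mod_cast hkn
  set e3 : ℚ := κ * ck * cn with he3
  set e2 : ℚ := κ * (ck * dn + cn * dk) - ak * cn + an * ck with he2
  set e1 : ℚ := κ * dk * dn - ak * dn - bk * cn + an * dk + bn * ck with he1
  set e0 : ℚ := -(bk * dn) + bn * dk with he0
  set P : ℚ[X] := C e3 * X ^ 3 + C e2 * X ^ 2 + C e1 * X + C e0 with hP
  have he3ne : e3 ≠ 0 := by
    simp [he3, hκ, hck, hcn]
  have hPne : P ≠ 0 := fun h => he3ne (by
    have := congrArg (fun q => Polynomial.coeff q 3) h
    simpa [hP, coeff_one, coeff_X] using this)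
  have hPaeval : Polynomial.aeval α P = 0 := by
    simp only [hP, map_add, map_mul, map_pow, aeval_C, aeval_X, eq_ratCast,
      he3, he2, he1, he0, hκdef]
    push_cast
    linear_combination ((ck:ℂ) * α + dk) * hn3' - ((cn:ℂ) * α + dn) * hk3'
  have hdegP : P.natDegree ≤ 3 := by
    rw [hP]
    compute_degree
  have halg : IsAlgebraic ℚ α := ⟨P, hPne, by simpa using hPaeval⟩
  have hint : IsIntegral ℚ α := halg.isIntegral
  have hmindeg : (minpoly ℚ α).natDegree ≤ 3 :=
    le_trans (Polynomial.natDegree_le_of_dvd (minpoly.dvd ℚ α (by simpa using hPaeval)) hPne) hdegP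
  refine ⟨⟨halg, hmindeg⟩, ?_⟩
  -- β lies in ℚ⟮α⟯
  set E := IntermediateField.adjoin ℚ ({α} : Set ℂ) with hE
  have hαE : α ∈ E := IntermediateField.mem_adjoin_simple_self ℚ α
  have hqmem : ∀ q : ℚ, (q : ℂ) ∈ E := fun q => by
    simpa using E.algebraMap_mem q
  have hzmem : ∀ z : ℤ, (z : ℂ) ∈ E := fun z => E.intCast_mem z
  have hβE : β ∈ E := by
    have hβeq : β = ((ak:ℂ) * α + bk) / ((ck:ℂ) * α + dk) - (k:ℂ) * α := by
      rw [hk3]; ring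
    rw [hβeq]
    exact sub_mem (div_mem (add_mem (mul_mem (hqmem ak) hαE) (hqmem bk))
      (add_mem (mul_mem (hqmem ck) hαE) (hqmem dk))) (mul_mem (hzmem k) hαE)
  -- power basis
  set pb := IntermediateField.adjoin.powerBasis hint with hpb
  obtain ⟨f, hfdeg, hfeq⟩ := pb.exists_eq_aeval (⟨β, hβE⟩ : E)
  have hdim : pb.dim = (minpoly ℚ α).natDegree := rfl
  have hfdeg3 : f.natDegree < 3 := lt_of_lt_of_le hfdeg (hdim ▸ hmindeg)
  have hβval : β = Polynomial.aeval α f := by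
    have := congrArg (E.val) hfeq
    rw [← Polynomial.aeval_algHom_apply] at this
    simpa [hpb, IntermediateField.AdjoinSimple.coe_gen] using this
  rw [hβval, Polynomial.aeval_eq_sum_range' hfdeg3]
  rw [Finset.sum_range_succ, Finset.sum_range_succ, Finset.sum_range_succ, Finset.sum_range_zero]
  refine add_mem (add_mem (add_mem (zero_mem _) ?_) ?_) ?_
  · exact Submodule.smul_mem _ _ (Submodule.subset_span (by simp))
  · exact Submodule.smul_mem _ _ (Submodule.subset_span (by simp))
  · exact Submodule.smul_mem _ _ (Submodule.subset_span (by simp))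
end

section
/- Let τ ∈ ℂ with Im(τ) > 0, let α ∈ ℂ, and let Γ ⊆ ℂ² be the additive subgroup generated by (1, 0), (0, 1), and (α, τ). Then: (a) for every m ∈ ℤ, the image of Γ under the ℂ-linear map (z₁, z₂) ↦ m·z₂ − z₁ equals ℤ + ℤ·(m·τ − α); and (b) for all integers m, n with m > n > (1 + Im(α))/Im(τ), there is no μ ∈ ℂ, μ ≠ 0, with μ·(ℤ + ℤ·(m·τ − α)) = ℤ + ℤ·(n·τ − α). -/
private lemma key_det (a b c d : ℤ) (μ w₁ w₂ : ℂ)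
    (h1 : μ = (a : ℂ) + (b : ℂ) * w₂) (h2 : μ * w₁ = (c : ℂ) + (d : ℂ) * w₂) :
    (μ.re ^ 2 + μ.im ^ 2) * w₁.im = ((a : ℝ) * d - b * c) * w₂.im := by
  have h1r := congrArg Complex.re h1
  have h1i := congrArg Complex.im h1
  have h2r := congrArg Complex.re h2
  have h2i := congrArg Complex.im h2
  simp [Complex.add_re, Complex.add_im, Complex.mul_re, Complex.mul_im] at h1r h1i h2r h2i
  rw [h1r, h1i] at h2r h2i ⊢
  linear_combination ((a : ℝ) + b * w₂.re) * h2i - (b : ℝ) * w₂.im * h2r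

private lemma small_lattice (a b : ℤ) (x y : ℝ) (hy : 1 < y)
    (h : ((a : ℝ) + (b : ℝ) * x) ^ 2 + ((b : ℝ) * y) ^ 2 < 1) : a = 0 ∧ b = 0 := by
  have hb : b = 0 := by
    by_contra hb0
    have hab1 : (1 : ℤ) ≤ |b| := Int.one_le_abs hb0
    have h2 : (1 : ℤ) ≤ b ^ 2 := by
      have := pow_le_pow_left₀ (by norm_num : (0 : ℤ) ≤ 1) hab1 2
      simpa [sq_abs] using this
    have hb1 : (1 : ℝ) ≤ (b : ℝ) ^ 2 := by exact_mod_cast h2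
    have hy2 : (1 : ℝ) < y ^ 2 := by nlinarith
    have hkey : (1 : ℝ) < (b : ℝ) ^ 2 * y ^ 2 := by nlinarith [sq_nonneg y]
    nlinarith [sq_nonneg ((a : ℝ) + (b : ℝ) * x), hkey]
  refine ⟨?_, hb⟩
  subst hb
  push_cast at h
  by_contra ha0
  have hab1 : (1 : ℤ) ≤ |a| := Int.one_le_abs ha0
  have h2 : (1 : ℤ) ≤ a ^ 2 := by
    have := pow_le_pow_left₀ (by norm_num : (0 : ℤ) ≤ 1) hab1 2
    simpa [sq_abs] using this
  have ha1 : (1 : ℝ) ≤ (a : ℝ) ^ 2 := by exact_mod_cast h2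
  nlinarith [sq_nonneg (y : ℝ)]

/-- For `Γ` generated by `(1,0), (0,1), (α,τ)` with `Im τ > 0`:
(a) the image of `Γ` under `(z₁,z₂) ↦ mz₂ - z₁` is the lattice `ℤ + ℤ(mτ - α)`;
(b) for integers `m > n > (1 + Im α)/Im τ` the lattices `ℤ + ℤ(mτ - α)` and
`ℤ + ℤ(nτ - α)` are not equivalent under any nonzero complex scalar. -/
theorem nonisomorphic_quotient_curves
    (τ α : ℂ) (hτ : 0 < τ.im)
    (Γ : AddSubgroup (ℂ × ℂ))
    (hΓ : Γ = AddSubgroup.closure ({(1, 0), (0, 1), (α, τ)} : Set (ℂ × ℂ))) :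
    (∀ m : ℤ, (fun v : ℂ × ℂ => (m : ℂ) * v.2 - v.1) '' (Γ : Set (ℂ × ℂ)) =
      {x : ℂ | ∃ a b : ℤ, x = (a : ℂ) + (b : ℂ) * ((m : ℂ) * τ - α)}) ∧
    (∀ m n : ℤ, m > n → (n : ℝ) > (1 + α.im) / τ.im →
      ¬ ∃ μ : ℂ, μ ≠ 0 ∧
        (fun x => μ * x) '' {x : ℂ | ∃ a b : ℤ, x = (a : ℂ) + (b : ℂ) * ((m : ℂ) * τ - α)} =
          {x : ℂ | ∃ a b : ℤ, x = (a : ℂ) + (b : ℂ) * ((n : ℂ) * τ - α)}) := by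
  constructor
  · -- part (a)
    intro m
    ext x
    constructor
    · rintro ⟨v, hv, rfl⟩
      rw [hΓ, SetLike.mem_coe] at hv
      induction hv using AddSubgroup.closure_induction with
      | mem v hv =>
        rcases hv with h | h | h
        · exact ⟨-1, 0, by subst h; push_cast; ring⟩
        · exact ⟨m, 0, by subst h; push_cast; ring⟩
        · exact ⟨0, 1, by subst h; push_cast; ring⟩
      | zero => exact ⟨0, 0, by simp⟩
      | add v w _ _ hv hw =>
        obtain ⟨a, b, hab⟩ := hv
        obtain ⟨c, d, hcd⟩ := hw
        exact ⟨a + c, b + d, by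
          simp only [Prod.fst_add, Prod.snd_add]
          push_cast
          linear_combination hab + hcd⟩
      | neg v _ hv =>
        obtain ⟨a, b, hab⟩ := hv
        exact ⟨-a, -b, by
          simp only [Prod.fst_neg, Prod.snd_neg]
          push_cast
          linear_combination -hab⟩
    · rintro ⟨a, b, rfl⟩
      refine ⟨(((-a : ℤ) : ℂ) + (b : ℂ) * α, (b : ℂ) * τ), ?_, by push_cast; ring⟩
      rw [hΓ, SetLike.mem_coe]
      have h1 : ((1, 0) : ℂ × ℂ) ∈ AddSubgroup.closure ({(1, 0), (0, 1), (α, τ)} : Set (ℂ × ℂ)) :=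
        AddSubgroup.subset_closure (by simp)
      have h3 : ((α, τ) : ℂ × ℂ) ∈ AddSubgroup.closure ({(1, 0), (0, 1), (α, τ)} : Set (ℂ × ℂ)) :=
        AddSubgroup.subset_closure (by simp)
      have heq : ((((-a : ℤ) : ℂ) + (b : ℂ) * α, (b : ℂ) * τ) : ℂ × ℂ)
          = (-a) • ((1, 0) : ℂ × ℂ) + b • ((α, τ) : ℂ × ℂ) := by
        simp [Prod.ext_iff, zsmul_eq_mul] <;> push_cast <;> ring
      rw [heq]
      exact add_mem (zsmul_mem h1 _) (zsmul_mem h3 _)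
  · -- part (b)
    rintro m n hmn hn ⟨μ, hμ, hset⟩
    set wm : ℂ := (m : ℂ) * τ - α with hwm
    set wn : ℂ := (n : ℂ) * τ - α with hwn
    have hwn_im : wn.im = (n : ℝ) * τ.im - α.im := by
      simp [hwn, Complex.sub_im, Complex.mul_im]
    have hwm_im : wm.im = (m : ℝ) * τ.im - α.im := by
      simp [hwm, Complex.sub_im, Complex.mul_im]
    have h1lt : 1 < wn.im := by
      rw [hwn_im]
      have := (div_lt_iff₀ hτ).mp hn
      linarith
    have hnm : wn.im < wm.im := by
      rw [hwn_im, hwm_im]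
      have : (n : ℝ) < m := by exact_mod_cast hmn
      nlinarith
    have hwnpos : 0 < wn.im := by linarith
    have hwmpos : 0 < wm.im := by linarith
    -- memberships
    have h1m : (1 : ℂ) ∈ {x : ℂ | ∃ a b : ℤ, x = (a : ℂ) + (b : ℂ) * wm} :=
      ⟨1, 0, by push_cast; ring⟩
    have hwmm : wm ∈ {x : ℂ | ∃ a b : ℤ, x = (a : ℂ) + (b : ℂ) * wm} :=
      ⟨0, 1, by push_cast; ring⟩
    have hμ1 : μ * 1 ∈ {x : ℂ | ∃ a b : ℤ, x = (a : ℂ) + (b : ℂ) * wn} := by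
      rw [← hset]; exact ⟨1, h1m, rfl⟩
    have hμwm : μ * wm ∈ {x : ℂ | ∃ a b : ℤ, x = (a : ℂ) + (b : ℂ) * wn} := by
      rw [← hset]; exact ⟨wm, hwmm, rfl⟩
    obtain ⟨a, b, hab⟩ := hμ1
    obtain ⟨c, d, hcd⟩ := hμwm
    rw [mul_one] at hab
    have h1n : (1 : ℂ) ∈ (fun x => μ * x) '' {x : ℂ | ∃ a b : ℤ, x = (a : ℂ) + (b : ℂ) * wm} := by
      rw [hset]; exact ⟨1, 0, by push_cast; ring⟩
    have hwnn : wn ∈ (fun x => μ * x) '' {x : ℂ | ∃ a b : ℤ, x = (a : ℂ) + (b : ℂ) * wm} := by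
      rw [hset]; exact ⟨0, 1, by push_cast; ring⟩
    obtain ⟨y, ⟨a', b', rfl⟩, hy1⟩ := h1n
    obtain ⟨z, ⟨c', d', rfl⟩, hz⟩ := hwnn
    simp only at hy1 hz
    set ν : ℂ := (a' : ℂ) + (b' : ℂ) * wm with hν
    have hνne : ν ≠ 0 := by
      intro h; rw [h, mul_zero] at hy1; exact one_ne_zero hy1.symm
    have hνwn : ν * wn = (c' : ℂ) + (d' : ℂ) * wm := by
      calc ν * wn = ν * (μ * ((c' : ℂ) + (d' : ℂ) * wm)) := by rw [hz]
        _ = (μ * ν) * ((c' : ℂ) + (d' : ℂ) * wm) := by ring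
        _ = (c' : ℂ) + (d' : ℂ) * wm := by rw [hy1, one_mul]
    have E1 := key_det a b c d μ wm wn hab hcd
    have E2 := key_det a' b' c' d' ν wn wm hν hνwn
    have hμsq : 0 < μ.re ^ 2 + μ.im ^ 2 := by
      have := Complex.normSq_pos.mpr hμ
      simpa [Complex.normSq_apply, sq] using this
    have hνsq : 0 < ν.re ^ 2 + ν.im ^ 2 := by
      have := Complex.normSq_pos.mpr hνne
      simpa [Complex.normSq_apply, sq] using this
    have hprod : (μ.re ^ 2 + μ.im ^ 2) * (ν.re ^ 2 + ν.im ^ 2) = 1 := by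
      have := congrArg Complex.normSq hy1
      simp [Complex.normSq_mul] at this
      simpa [Complex.normSq_apply, sq] using this
    have hDpos : (0 : ℝ) < (a : ℝ) * d - b * c := by
      have h0 : 0 < ((a : ℝ) * d - b * c) * wn.im := E1 ▸ mul_pos hμsq hwmpos
      nlinarith
    have hD'pos : (0 : ℝ) < (a' : ℝ) * d' - b' * c' := by
      have h0 : 0 < ((a' : ℝ) * d' - b' * c') * wm.im := E2 ▸ mul_pos hνsq hwnpos
      nlinarith
    have hD1 : (1 : ℝ) ≤ (a : ℝ) * d - b * c := by
      have hz : (0 : ℤ) < a * d - b * c := by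
        have : (0 : ℝ) < ((a * d - b * c : ℤ) : ℝ) := by push_cast; linarith
        exact_mod_cast this
      have h1 : (1 : ℤ) ≤ a * d - b * c := hz
      have : (1 : ℝ) ≤ ((a * d - b * c : ℤ) : ℝ) := by exact_mod_cast h1
      push_cast at this
      linarith
    have hD'1 : (1 : ℝ) ≤ (a' : ℝ) * d' - b' * c' := by
      have hz : (0 : ℤ) < a' * d' - b' * c' := by
        have : (0 : ℝ) < ((a' * d' - b' * c' : ℤ) : ℝ) := by push_cast; linarith
        exact_mod_cast this
      have h1 : (1 : ℤ) ≤ a' * d' - b' * c' := hz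
      have : (1 : ℝ) ≤ ((a' * d' - b' * c' : ℤ) : ℝ) := by exact_mod_cast h1
      push_cast at this
      linarith
    have h3 : (((a : ℝ) * d - b * c) * ((a' : ℝ) * d' - b' * c')) * (wn.im * wm.im)
        = wn.im * wm.im := by
      linear_combination (-((a' : ℝ) * d' - b' * c') * wm.im) * E1 +
        (-(μ.re ^ 2 + μ.im ^ 2) * wm.im) * E2 + (wm.im * wn.im) * hprod
    have hDD' : ((a : ℝ) * d - b * c) * ((a' : ℝ) * d' - b' * c') = 1 :=
      mul_right_cancel₀ (ne_of_gt (mul_pos hwnpos hwmpos)) (h3.trans (one_mul _).symm)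
    have hDeq : ((a : ℝ) * d - b * c) = 1 := by
      have hle := mul_le_mul_of_nonneg_left hD'1 (le_of_lt hDpos)
      rw [mul_one] at hle
      rw [hDD'] at hle
      linarith
    rw [hDeq, one_mul] at E1
    have hμlt : μ.re ^ 2 + μ.im ^ 2 < 1 := by
      nlinarith [E1, hnm, hwmpos, hμsq]
    -- components of μ
    have habr := congrArg Complex.re hab
    have habi := congrArg Complex.im hab
    simp [Complex.add_re, Complex.add_im, Complex.mul_re, Complex.mul_im] at habr habi
    rw [habr, habi] at hμlt
    obtain ⟨ha, hb⟩ := small_lattice a b wn.re wn.im h1lt hμlt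
    rw [ha, hb] at hab
    push_cast at hab
    simp at hab
    exact hμ hab
end
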